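/- Let u : ℝ → ℝ be twice differentiable, let x_0,…,x_n be distinct real points with u(x_0),…,u(x_n) pairwise distinct and u'(x_i) ≠ 0 for all i, and let L_j denote the generalized Lagrange functions. Then for every index j with 0 ≤ j ≤ n, the derivative of L_j at x_j equals κ_j · (u'(x_j) w''(x_j) − u''(x_j) w'(x_j)) / (2 u'(x_j)²); that is, the diagonal entry of the first-order differentiation matrix D is d_{jj} = κ_j (u'_j w''(x_j) − u''_j w'(x_j)) / (2 (u'_j)²). -/

import Mathlib

open Finset

/-- `glW u x t = ∏ i, (u t − u (x i))`. -/
noncomputable def glW (u : ℝ → ℝ) {n : ℕ} (x : Fin (n + 1) → ℝ) : ℝ → ℝ :=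
  fun t => ∏ i, (u t - u (x i))

/-- Generalized Lagrange function `L_j(t) = κ_j ∏_{i ≠ j} (u t − u (x i))`,
with `κ_j = u'(x_j) / w'(x_j)`. -/
noncomputable def glL (u : ℝ → ℝ) {n : ℕ} (x : Fin (n + 1) → ℝ) (j : Fin (n + 1)) : ℝ → ℝ :=
  fun t => (deriv u (x j) / deriv (glW u x) (x j)) *
    ∏ i ∈ Finset.univ.erase j, (u t - u (x i))

open Polynomial in
private lemma poly_comp_hasDerivAt (p : ℝ[X]) {u : ℝ → ℝ} (hu : Differentiable ℝ u) (t : ℝ) :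
    HasDerivAt (fun s => p.eval (u s)) (deriv u t * p.derivative.eval (u t)) t := by
  have h := (p.hasDerivAt (u t)).comp t (hu t).hasDerivAt
  rw [mul_comm] at h
  exact h

open Polynomial in
theorem gl_deriv_diag (n : ℕ) (u : ℝ → ℝ) (x : Fin (n + 1) → ℝ)
    (hu : Differentiable ℝ u)
    (hu2 : Differentiable ℝ (deriv u))
    (hx : Function.Injective x)
    (hux : Function.Injective (u ∘ x))
    (hu' : ∀ i, deriv u (x i) ≠ 0)
    (j : Fin (n + 1)) :
    deriv (glL u x j) (x j) =
      (deriv u (x j) / deriv (glW u x) (x j)) *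
        (deriv u (x j) * deriv (deriv (glW u x)) (x j) -
          deriv (deriv u) (x j) * deriv (glW u x) (x j)) /
        (2 * (deriv u (x j)) ^ 2) := by
  set W : ℝ[X] := ∏ i, (X - C (u (x i))) with hWdef
  set P : ℝ[X] := ∏ i ∈ Finset.univ.erase j, (X - C (u (x i))) with hPdef
  -- glW as polynomial evaluation
  have hglW : glW u x = fun t => W.eval (u t) := by
    funext t; simp [glW, hWdef, eval_prod]
  -- factorization W = (X - u_j) * P
  have hWP : W = (X - C (u (x j))) * P := by
    rw [hWdef, hPdef, ← Finset.mul_prod_erase Finset.univ _ (Finset.mem_univ j)]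
  -- derivative facts
  have hW' : W.derivative = P + (X - C (u (x j))) * P.derivative := by
    rw [hWP]; simp [derivative_mul]
  have hW'j : W.derivative.eval (u (x j)) = P.eval (u (x j)) := by
    rw [hW']; simp
  have hW''j : W.derivative.derivative.eval (u (x j)) = 2 * P.derivative.eval (u (x j)) := by
    rw [hW']
    simp [derivative_mul]
    ring
  -- first derivative of glW
  have hdW : deriv (glW u x) = fun t => deriv u t * W.derivative.eval (u t) := by
    funext t
    rw [hglW]
    exact (poly_comp_hasDerivAt W hu t).deriv
  -- second derivative of glW at x j
  have hddW : deriv (deriv (glW u x)) (x j) =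
      deriv (deriv u) (x j) * W.derivative.eval (u (x j)) +
        deriv u (x j) * (deriv u (x j) * W.derivative.derivative.eval (u (x j))) := by
    rw [hdW]
    exact (((hu2 (x j)).hasDerivAt).mul (poly_comp_hasDerivAt W.derivative hu (x j))).deriv
  -- derivative of glL at x j
  have hdL : deriv (glL u x j) (x j) =
      (deriv u (x j) / deriv (glW u x) (x j)) *
        (deriv u (x j) * P.derivative.eval (u (x j))) := by
    have : glL u x j = fun t =>
        (deriv u (x j) / deriv (glW u x) (x j)) * P.eval (u t) := by
      funext t; simp [glL, hPdef, eval_prod]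
    rw [this]
    exact ((poly_comp_hasDerivAt P hu (x j)).const_mul _).deriv
  -- nonvanishing of P at u (x j)
  have hp : P.eval (u (x j)) ≠ 0 := by
    rw [hPdef]
    simp only [eval_prod, eval_sub, eval_X, eval_C]
    refine Finset.prod_ne_zero_iff.mpr fun i hi => ?_
    have hij : i ≠ j := (Finset.mem_erase.mp hi).1
    intro h
    have := hux (show (u ∘ x) j = (u ∘ x) i by simpa [Function.comp] using sub_eq_zero.mp h)
    exact hij this.symm
  -- plug in values
  have hdWj : deriv (glW u x) (x j) = deriv u (x j) * P.eval (u (x j)) := by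
    rw [hdW]; simp [hW'j]
  rw [hdL, hddW, hdWj, hW'j, hW''j]
  set a := deriv u (x j) with ha
  set b := deriv (deriv u) (x j)
  set p := P.eval (u (x j))
  set q := P.derivative.eval (u (x j))
  have ha0 : a ≠ 0 := hu' j
  field_simp
  ring
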